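/- If Φ and Ψ are compact with respect to their sup-norm distances and the right action of G on Φ is continuous, then the set of all GENEOs from (Φ, G) to (Ψ, H) associated with T is compact (equivalently sequentially compact) with respect to the metric D_GENEO(F1, F2) = sup_{φ∈Φ} ‖F1(φ) − F2(φ)‖_∞. -/

import Mathlib

open scoped ENNReal

/-- The (extended) sup-norm distance between two real-valued functions. -/
noncomputable def eDist {Z : Type*} (f1 f2 : Z → ℝ) : ℝ≥0∞ :=
  ⨆ z, ENNReal.ofReal |f1 z - f2 z|

/-- `F` is a group equivariant non-expansive operator from `(Φ,G)` to `(Ψ,H)`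
associated with the homomorphism `T : G → H`. -/
def IsGENEO {X Y : Type*} (Φ : Set (X → ℝ)) (Ψ : Set (Y → ℝ))
    (G : Subgroup (Equiv.Perm X)) (H : Subgroup (Equiv.Perm Y)) (T : G →* H)
    (F : (X → ℝ) → (Y → ℝ)) : Prop :=
  (∀ φ ∈ Φ, F φ ∈ Ψ) ∧
  (∀ φ ∈ Φ, ∀ g : G, F (fun x => φ (g.1 x)) = fun y => F φ ((T g).1 y)) ∧
  (∀ φ1 ∈ Φ, ∀ φ2 ∈ Φ, eDist (F φ1) (F φ2) ≤ eDist φ1 φ2)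

theorem eDist_comm' {Z : Type*} (f g : Z → ℝ) : eDist f g = eDist g f := by
  unfold eDist; simp_rw [abs_sub_comm]

theorem eDist_triangle' {Z : Type*} (f g h : Z → ℝ) :
    eDist f h ≤ eDist f g + eDist g h := by
  unfold eDist
  refine iSup_le fun z => ?_
  calc ENNReal.ofReal |f z - h z|
      ≤ ENNReal.ofReal (|f z - g z| + |g z - h z|) :=
        ENNReal.ofReal_le_ofReal (abs_sub_le _ _ _)
    _ = ENNReal.ofReal |f z - g z| + ENNReal.ofReal |g z - h z| :=
        ENNReal.ofReal_add (abs_nonneg _) (abs_nonneg _)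
    _ ≤ _ := add_le_add (le_iSup (fun z => ENNReal.ofReal |f z - g z|) z)
        (le_iSup (fun z => ENNReal.ofReal |g z - h z|) z)

theorem eDist_comp' {Z : Type*} (σ : Equiv.Perm Z) (f g : Z → ℝ) :
    eDist (fun z => f (σ z)) (fun z => g (σ z)) = eDist f g := by
  unfold eDist
  exact σ.surjective.iSup_comp fun w => ENNReal.ofReal |f w - g w|

theorem eq_of_forall_eDist_lt {Z : Type*} {f g : Z → ℝ}
    (h : ∀ ε : ℝ≥0∞, 0 < ε → eDist f g < ε) : f = g := by
  have h0 : eDist f g = 0 := by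
    by_contra hne
    exact absurd (h _ (pos_iff_ne_zero.2 hne)) (lt_irrefl _)
  funext z
  have hz : ENNReal.ofReal |f z - g z| ≤ 0 :=
    h0 ▸ le_iSup (fun z => ENNReal.ofReal |f z - g z|) z
  have h1 : |f z - g z| ≤ 0 := ENNReal.ofReal_eq_zero.1 (le_antisymm hz bot_le)
  have h2 := abs_nonpos_iff.1 h1
  linarith [sub_eq_zero.1 h2]

theorem totallyBounded_of_seqCompact {X : Type*} (Φ : Set (X → ℝ))
    (hΦcomp : ∀ u : ℕ → X → ℝ, (∀ n, u n ∈ Φ) →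
      ∃ φ ∈ Φ, ∃ k : ℕ → ℕ, StrictMono k ∧
        ∀ ε : ℝ≥0∞, 0 < ε → ∃ N, ∀ n ≥ N, eDist (u (k n)) φ < ε) :
    ∀ ε : ℝ≥0∞, 0 < ε → ∃ t : Set (X → ℝ), t ⊆ Φ ∧ t.Finite ∧
      ∀ φ ∈ Φ, ∃ c ∈ t, eDist φ c < ε := by
  classical
  intro ε hε
  by_contra hcon
  push_neg at hcon
  have hcon' : ∀ t : Finset (X → ℝ), ∃ φ, (↑t : Set (X → ℝ)) ⊆ Φ →
      φ ∈ Φ ∧ ∀ c ∈ t, ε ≤ eDist φ c := by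
    intro t
    by_cases h : (↑t : Set (X → ℝ)) ⊆ Φ
    · obtain ⟨φ, hφ, hsep⟩ := hcon ↑t h t.finite_toSet
      exact ⟨φ, fun _ => ⟨hφ, fun c hc => hsep c hc⟩⟩
    · exact ⟨fun _ => 0, fun hh => absurd hh h⟩
  choose pick hpick using hcon'
  obtain ⟨v, hv0, hvs⟩ : ∃ v : ℕ → Finset (X → ℝ), v 0 = ∅ ∧
      ∀ n, v (n + 1) = insert (pick (v n)) (v n) :=
    ⟨fun n => Nat.rec ∅ (fun _ s => insert (pick s) s) n, rfl, fun _ => rfl⟩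
  have hvsub : ∀ n, (↑(v n) : Set (X → ℝ)) ⊆ Φ := by
    intro n
    induction n with
    | zero => rw [hv0]; simp
    | succ n ih =>
      rw [hvs]
      intro x hx
      rcases Finset.mem_insert.1 hx with h | h
      · exact h ▸ (hpick (v n) ih).1
      · exact ih h
  have hvmono : ∀ m n, m ≤ n → v m ⊆ v n := by
    intro m n h
    induction n, h using Nat.le_induction with
    | base => exact subset_rfl
    | succ n hmn ih => rw [hvs]; exact ih.trans (Finset.subset_insert _ _)
  have huΦ : ∀ n, pick (v n) ∈ Φ := fun n => (hpick (v n) (hvsub n)).1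
  have husep : ∀ m n, m < n → ε ≤ eDist (pick (v n)) (pick (v m)) := by
    intro m n h
    have h1 : pick (v m) ∈ v (m + 1) := by rw [hvs]; exact Finset.mem_insert_self _ _
    have h2 : pick (v m) ∈ v n := hvmono (m + 1) n h h1
    exact (hpick (v n) (hvsub n)).2 (pick (v m)) h2
  obtain ⟨φ, hφ, k, hk, hconv⟩ := hΦcomp (fun n => pick (v n)) huΦ
  have hε'0 : min ε 1 ≠ 0 := (lt_min hε one_pos).ne'
  obtain ⟨N, hN⟩ := hconv (min ε 1 / 2) (ENNReal.half_pos hε'0)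
  have hlt : k N < k (N + 1) := hk (Nat.lt_succ_self N)
  have hs := husep (k N) (k (N + 1)) hlt
  have hb : eDist (pick (v (k (N + 1)))) (pick (v (k N))) < ε := by
    calc eDist (pick (v (k (N + 1)))) (pick (v (k N)))
        ≤ eDist (pick (v (k (N + 1)))) φ + eDist φ (pick (v (k N))) := eDist_triangle' _ _ _
      _ = eDist (pick (v (k (N + 1)))) φ + eDist (pick (v (k N))) φ := by
          rw [eDist_comm' φ]
      _ < min ε 1 / 2 + min ε 1 / 2 :=
          ENNReal.add_lt_add (hN (N + 1) (Nat.le_succ N)) (hN N le_rfl)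
      _ = min ε 1 := ENNReal.add_halves _
      _ ≤ ε := min_le_left _ _
  exact absurd hb (not_lt.2 hs)

/-- if `Φ` and `Ψ` are (sequentially) compact for the sup-norm distance and
the right action of `G` on `Φ` is continuous, then the set of all GENEOs from `(Φ,G)` to
`(Ψ,H)` associated with `T` is sequentially compact with respect to
`D_GENEO(F1,F2) = sup_{φ∈Φ} ‖F1 φ − F2 φ‖_∞`. -/
theorem stmt15 {X Y : Type*} [Nonempty X] [Nonempty Y]
    (Φ : Set (X → ℝ)) (Ψ : Set (Y → ℝ))
    (G : Subgroup (Equiv.Perm X)) (H : Subgroup (Equiv.Perm Y))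
    (hG : ∀ g ∈ G, ∀ φ ∈ Φ, (fun x => φ (g x)) ∈ Φ)
    (hH : ∀ h ∈ H, ∀ ψ ∈ Ψ, (fun y => ψ (h y)) ∈ Ψ)
    (T : G →* H)
    -- sequential compactness of `Φ` and `Ψ` with respect to the sup-norm distance
    (hΦcomp : ∀ u : ℕ → X → ℝ, (∀ n, u n ∈ Φ) →
      ∃ φ ∈ Φ, ∃ k : ℕ → ℕ, StrictMono k ∧
        ∀ ε : ℝ≥0∞, 0 < ε → ∃ N, ∀ n ≥ N, eDist (u (k n)) φ < ε)
    (hΨcomp : ∀ v : ℕ → Y → ℝ, (∀ n, v n ∈ Ψ) →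
      ∃ ψ ∈ Ψ, ∃ k : ℕ → ℕ, StrictMono k ∧
        ∀ ε : ℝ≥0∞, 0 < ε → ∃ N, ∀ n ≥ N, eDist (v (k n)) ψ < ε)
    (DG : G → G → ℝ≥0∞)
    (hDG : ∀ g1 g2 : G, DG g1 g2 =
      ⨆ φ : Φ, eDist (fun x => φ.1 (g1.1 x)) (fun x => φ.1 (g2.1 x)))
    -- continuity of the right action of `G` on `Φ`
    (hcont : ∀ ε : ℝ≥0∞, 0 < ε → ∀ φ ∈ Φ, ∀ g : G, ∃ δ : ℝ≥0∞, 0 < δ ∧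
      ∀ φ' ∈ Φ, ∀ g' : G, eDist φ φ' < δ → DG g g' < δ →
        eDist (fun x => φ (g.1.1 x)) (fun x => φ' (g'.1.1 x)) < ε)
    (DGEN : ((X → ℝ) → (Y → ℝ)) → ((X → ℝ) → (Y → ℝ)) → ℝ≥0∞)
    (hDGEN : ∀ F1 F2, DGEN F1 F2 = ⨆ φ : Φ, eDist (F1 φ.1) (F2 φ.1)) :
    ∀ F : ℕ → ((X → ℝ) → (Y → ℝ)), (∀ n, IsGENEO Φ Ψ G H T (F n)) →
      ∃ Fbar, IsGENEO Φ Ψ G H T Fbar ∧ ∃ k : ℕ → ℕ, StrictMono k ∧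
        ∀ ε : ℝ≥0∞, 0 < ε → ∃ N, ∀ n ≥ N, DGEN (F (k n)) Fbar < ε := by
  classical
  intro F hF
  rcases Set.eq_empty_or_nonempty Φ with hΦe | ⟨φ₀, hφ₀⟩
  · refine ⟨F 0, hF 0, id, strictMono_id, fun ε hε => ⟨0, fun n _ => ?_⟩⟩
    rw [hDGEN]
    haveI : IsEmpty ↥Φ := Set.isEmpty_coe_sort.mpr hΦe
    rw [iSup_of_empty]
    exact hε
  -- total boundedness of Φ
  have TB := totallyBounded_of_seqCompact Φ hΦcomp
  -- nets at scales 1/n and the countable dense sequence d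
  have hnet : ∀ n : ℕ, ∃ t : Set (X → ℝ), t ⊆ Φ ∧ t.Finite ∧
      ∀ φ ∈ Φ, ∃ c ∈ t, eDist φ c < ((n : ℝ≥0∞))⁻¹ :=
    fun n => TB _ (ENNReal.inv_pos.2 (ENNReal.natCast_ne_top n))
  choose net hnetsub hnetfin hnetcov using hnet
  have hDc : (⋃ n, net n).Countable := Set.countable_iUnion fun n => (hnetfin n).countable
  have hDne : (⋃ n, net n).Nonempty := by
    obtain ⟨c, hc, -⟩ := hnetcov 1 φ₀ hφ₀
    exact ⟨c, Set.mem_iUnion.2 ⟨1, hc⟩⟩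
  obtain ⟨d, hd⟩ := hDc.exists_eq_range hDne
  have hdΦ : ∀ i, d i ∈ Φ := fun i =>
    (Set.iUnion_subset hnetsub : (⋃ n, net n) ⊆ Φ) (hd ▸ Set.mem_range_self i)
  -- one extraction step via sequential compactness of Ψ
  have step : ∀ (g : ℕ → ℕ) (i : ℕ), ∃ ψ, ψ ∈ Ψ ∧ ∃ e : ℕ → ℕ, StrictMono e ∧
      ∀ ε : ℝ≥0∞, 0 < ε → ∃ N, ∀ n ≥ N, eDist (F (g (e n)) (d i)) ψ < ε := by
    intro g i
    obtain ⟨ψ, hψ, e, he, hc⟩ :=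
      hΨcomp (fun n => F (g n) (d i)) (fun n => (hF (g n)).1 _ (hdΦ i))
    exact ⟨ψ, hψ, e, he, hc⟩
  choose ψof hψofΨ eof heof hconvof using step
  -- the diagonal sequence of extractions
  obtain ⟨Gd, hGd0, hGdsucc⟩ : ∃ Gd : ℕ → ℕ → ℕ, Gd 0 = eof id 0 ∧
      ∀ i, Gd (i + 1) = Gd i ∘ eof (Gd i) (i + 1) :=
    ⟨fun i => Nat.rec (eof id 0) (fun i gi => gi ∘ eof gi (i + 1)) i, rfl, fun _ => rfl⟩
  have hGmono : ∀ i, StrictMono (Gd i) := by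
    intro i
    induction i with
    | zero => rw [hGd0]; exact heof id 0
    | succ i ih => rw [hGdsucc]; exact ih.comp (heof _ _)
  have hGconv : ∀ i, ∃ ψi ∈ Ψ, ∀ ε : ℝ≥0∞, 0 < ε → ∃ N, ∀ n ≥ N,
      eDist (F (Gd i n) (d i)) ψi < ε := by
    intro i
    cases i with
    | zero =>
      refine ⟨ψof id 0, hψofΨ id 0, ?_⟩
      simp only [hGd0]
      exact hconvof id 0
    | succ j =>
      refine ⟨ψof (Gd j) (j + 1), hψofΨ _ _, ?_⟩
      simp only [hGdsucc]
      exact hconvof (Gd j) (j + 1)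
  have hGsub : ∀ i j, i ≤ j → ∃ c : ℕ → ℕ, StrictMono c ∧ Gd j = Gd i ∘ c := by
    intro i j h
    induction j, h using Nat.le_induction with
    | base => exact ⟨id, strictMono_id, rfl⟩
    | succ j hij ih =>
      obtain ⟨c, hc, hcc⟩ := ih
      exact ⟨c ∘ eof (Gd j) (j + 1), hc.comp (heof _ _), by rw [hGdsucc, hcc]; rfl⟩
  obtain ⟨k, hkn⟩ : ∃ k : ℕ → ℕ, ∀ n, k n = Gd n n := ⟨fun n => Gd n n, fun _ => rfl⟩
  have hkmono : StrictMono k := by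
    apply strictMono_nat_of_lt_succ
    intro n
    rw [hkn, hkn, hGdsucc]
    calc Gd n n < Gd n (n + 1) := hGmono n (Nat.lt_succ_self n)
      _ ≤ Gd n (eof (Gd n) (n + 1) (n + 1)) := (hGmono n).monotone (heof (Gd n) (n + 1)).le_apply
      _ = (Gd n ∘ eof (Gd n) (n + 1)) (n + 1) := rfl
  -- convergence along the diagonal at each point of the dense sequence
  have hkconv : ∀ i, ∃ ψi ∈ Ψ, ∀ ε : ℝ≥0∞, 0 < ε → ∃ N, ∀ n ≥ N,
      eDist (F (k n) (d i)) ψi < ε := by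
    intro i
    obtain ⟨ψi, hψi, hci⟩ := hGconv i
    refine ⟨ψi, hψi, fun ε hε => ?_⟩
    obtain ⟨N, hN⟩ := hci ε hε
    refine ⟨max N i, fun n hn => ?_⟩
    obtain ⟨c, hc, hcc⟩ := hGsub i n (le_trans (le_max_right N i) hn)
    have h1 : k n = Gd i (c n) := by rw [hkn, hcc]; rfl
    rw [h1]
    exact hN (c n) (le_trans (le_trans (le_max_left N i) hn) hc.le_apply)
  -- uniform Cauchy property on Φ along the diagonal
  have hcauchy : ∀ ε : ℝ≥0∞, 0 < ε → ∃ N, ∀ m ≥ N, ∀ n ≥ N, ∀ φ ∈ Φ,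
      eDist (F (k m) φ) (F (k n) φ) < ε := by
    intro ε hε
    have hε'0 : min ε 1 ≠ 0 := (lt_min hε one_pos).ne'
    have hq0 : min ε 1 / 2 / 2 ≠ 0 := (ENNReal.half_pos (ENNReal.half_pos hε'0).ne').ne'
    obtain ⟨M, hM⟩ := ENNReal.exists_inv_nat_lt hq0
    have hcen : ∀ c ∈ net M, ∃ Nc : ℕ, ∀ m ≥ Nc, ∀ n ≥ Nc,
        eDist (F (k m) c) (F (k n) c) < min ε 1 / 2 / 2 + min ε 1 / 2 / 2 := by
      intro c hc
      obtain ⟨i, hi⟩ : ∃ i, d i = c := by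
        have hcD : c ∈ (⋃ n, net n) := Set.mem_iUnion.2 ⟨M, hc⟩
        rw [hd] at hcD
        exact hcD
      obtain ⟨ψi, -, hci⟩ := hkconv i
      obtain ⟨Nc, hNc⟩ := hci _ (pos_iff_ne_zero.2 hq0)
      refine ⟨Nc, fun m hm n hn => ?_⟩
      rw [← hi]
      calc eDist (F (k m) (d i)) (F (k n) (d i))
          ≤ eDist (F (k m) (d i)) ψi + eDist ψi (F (k n) (d i)) := eDist_triangle' _ _ _
        _ = eDist (F (k m) (d i)) ψi + eDist (F (k n) (d i)) ψi := by rw [eDist_comm' ψi]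
        _ < min ε 1 / 2 / 2 + min ε 1 / 2 / 2 :=
            ENNReal.add_lt_add (hNc m hm) (hNc n hn)
    choose! Nc hNc using hcen
    refine ⟨(hnetfin M).toFinset.sup Nc, fun m hm n hn φ hφ => ?_⟩
    obtain ⟨c, hc, hφc⟩ := hnetcov M φ hφ
    have hcq : eDist φ c < min ε 1 / 2 / 2 := lt_trans hφc hM
    have hNcle : Nc c ≤ (hnetfin M).toFinset.sup Nc :=
      Finset.le_sup ((hnetfin M).mem_toFinset.2 hc)
    have hmid := hNc c hc m (le_trans hNcle hm) n (le_trans hNcle hn)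
    have hmono1 : eDist (F (k m) φ) (F (k m) c) ≤ eDist φ c :=
      (hF (k m)).2.2 φ hφ c (hnetsub M hc)
    have hmono2 : eDist (F (k n) c) (F (k n) φ) ≤ eDist c φ :=
      (hF (k n)).2.2 c (hnetsub M hc) φ hφ
    have hcq2 : eDist c φ < min ε 1 / 2 / 2 := by rw [eDist_comm']; exact hcq
    calc eDist (F (k m) φ) (F (k n) φ)
        ≤ eDist (F (k m) φ) (F (k n) c) + eDist (F (k n) c) (F (k n) φ) :=
          eDist_triangle' _ _ _
      _ ≤ (eDist (F (k m) φ) (F (k m) c) + eDist (F (k m) c) (F (k n) c)) +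
            eDist (F (k n) c) (F (k n) φ) :=
          add_le_add_left (eDist_triangle' _ _ _) _
      _ ≤ (eDist φ c + eDist (F (k m) c) (F (k n) c)) + eDist c φ :=
          add_le_add (add_le_add hmono1 le_rfl) hmono2
      _ < (min ε 1 / 2 / 2 + (min ε 1 / 2 / 2 + min ε 1 / 2 / 2)) + min ε 1 / 2 / 2 :=
          ENNReal.add_lt_add (ENNReal.add_lt_add hcq hmid) hcq2
      _ = min ε 1 := by
          rw [show min ε 1 / 2 / 2 + (min ε 1 / 2 / 2 + min ε 1 / 2 / 2) + min ε 1 / 2 / 2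
              = (min ε 1 / 2 / 2 + min ε 1 / 2 / 2) + (min ε 1 / 2 / 2 + min ε 1 / 2 / 2) by ring,
            ENNReal.add_halves, ENNReal.add_halves]
      _ ≤ ε := min_le_left _ _
  -- limit operator
  have main : ∀ φ ∈ Φ, ∃ ψ, ψ ∈ Ψ ∧ ∀ ε : ℝ≥0∞, 0 < ε → ∃ N, ∀ n ≥ N,
      eDist (F (k n) φ) ψ < ε := by
    intro φ hφ
    obtain ⟨ψ, hψ, e, he, hec⟩ := hΨcomp (fun n => F (k n) φ) (fun n => (hF (k n)).1 _ hφ)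
    refine ⟨ψ, hψ, fun ε hε => ?_⟩
    have hε'0 : min ε 1 ≠ 0 := (lt_min hε one_pos).ne'
    obtain ⟨N1, hN1⟩ := hcauchy (min ε 1 / 2) (ENNReal.half_pos hε'0)
    obtain ⟨N2, hN2⟩ := hec (min ε 1 / 2) (ENNReal.half_pos hε'0)
    refine ⟨N1, fun n hn => ?_⟩
    have hem1 : N1 ≤ e (max N1 N2) := le_trans (le_max_left _ _) he.le_apply
    calc eDist (F (k n) φ) ψ
        ≤ eDist (F (k n) φ) (F (k (e (max N1 N2))) φ) + eDist (F (k (e (max N1 N2))) φ) ψ :=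
          eDist_triangle' _ _ _
      _ < min ε 1 / 2 + min ε 1 / 2 :=
          ENNReal.add_lt_add (hN1 n hn (e (max N1 N2)) hem1 φ hφ)
            (hN2 (max N1 N2) (le_max_right _ _))
      _ = min ε 1 := ENNReal.add_halves _
      _ ≤ ε := min_le_left _ _
  choose! Fb hFbΨ hFbconv using main
  refine ⟨Fb, ⟨fun φ hφ => hFbΨ φ hφ, ?_, ?_⟩, k, hkmono, ?_⟩
  · -- equivariance
    intro φ hφ g
    have hφg : (fun x => φ (g.1 x)) ∈ Φ := hG g.1 g.2 φ hφ
    apply eq_of_forall_eDist_lt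
    intro ε hε
    have hε'0 : min ε 1 ≠ 0 := (lt_min hε one_pos).ne'
    obtain ⟨N1, hN1⟩ := hFbconv _ hφg (min ε 1 / 2) (ENNReal.half_pos hε'0)
    obtain ⟨N2, hN2⟩ := hFbconv φ hφ (min ε 1 / 2) (ENNReal.half_pos hε'0)
    have heq : F (k (max N1 N2)) (fun x => φ (g.1 x))
        = fun y => F (k (max N1 N2)) φ ((T g).1 y) := (hF (k (max N1 N2))).2.1 φ hφ g
    have hA : eDist (Fb fun x => φ (g.1 x)) (F (k (max N1 N2)) fun x => φ (g.1 x))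
        < min ε 1 / 2 := by
      rw [eDist_comm']
      exact hN1 (max N1 N2) (le_max_left _ _)
    have hB : eDist (F (k (max N1 N2)) fun x => φ (g.1 x)) (fun y => Fb φ ((T g).1 y))
        < min ε 1 / 2 := by
      rw [heq, eDist_comp']
      exact hN2 (max N1 N2) (le_max_right _ _)
    calc eDist (Fb fun x => φ (g.1 x)) (fun y => Fb φ ((T g).1 y))
        ≤ eDist (Fb fun x => φ (g.1 x)) (F (k (max N1 N2)) fun x => φ (g.1 x)) +
            eDist (F (k (max N1 N2)) fun x => φ (g.1 x)) (fun y => Fb φ ((T g).1 y)) :=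
          eDist_triangle' _ _ _
      _ < min ε 1 / 2 + min ε 1 / 2 := ENNReal.add_lt_add hA hB
      _ = min ε 1 := ENNReal.add_halves _
      _ ≤ ε := min_le_left _ _
  · -- non-expansiveness
    intro φ1 hφ1 φ2 hφ2
    rcases eq_or_ne (eDist φ1 φ2) ⊤ with htop | htop
    · rw [htop]; exact le_top
    apply ENNReal.le_of_forall_pos_le_add
    intro δ hδ _
    have hδ2 : (0 : ℝ≥0∞) < (δ : ℝ≥0∞) / 2 :=
      ENNReal.half_pos (by exact_mod_cast hδ.ne')
    obtain ⟨N1, hN1⟩ := hFbconv φ1 hφ1 _ hδ2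
    obtain ⟨N2, hN2⟩ := hFbconv φ2 hφ2 _ hδ2
    have h1 : eDist (Fb φ1) (F (k (max N1 N2)) φ1) ≤ (δ : ℝ≥0∞) / 2 := by
      rw [eDist_comm']
      exact (hN1 (max N1 N2) (le_max_left _ _)).le
    have h2 : eDist (F (k (max N1 N2)) φ2) (Fb φ2) ≤ (δ : ℝ≥0∞) / 2 :=
      (hN2 (max N1 N2) (le_max_right _ _)).le
    calc eDist (Fb φ1) (Fb φ2)
        ≤ eDist (Fb φ1) (F (k (max N1 N2)) φ2) + eDist (F (k (max N1 N2)) φ2) (Fb φ2) :=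
          eDist_triangle' _ _ _
      _ ≤ (eDist (Fb φ1) (F (k (max N1 N2)) φ1) +
            eDist (F (k (max N1 N2)) φ1) (F (k (max N1 N2)) φ2)) +
            eDist (F (k (max N1 N2)) φ2) (Fb φ2) :=
          add_le_add_left (eDist_triangle' _ _ _) _
      _ ≤ ((δ : ℝ≥0∞) / 2 + eDist φ1 φ2) + (δ : ℝ≥0∞) / 2 :=
          add_le_add (add_le_add h1 ((hF (k (max N1 N2))).2.2 φ1 hφ1 φ2 hφ2)) h2
      _ = eDist φ1 φ2 + ((δ : ℝ≥0∞) / 2 + (δ : ℝ≥0∞) / 2) := by ring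
      _ = eDist φ1 φ2 + (δ : ℝ≥0∞) := by rw [ENNReal.add_halves]
  · -- convergence in the GENEO distance
    intro ε hε
    have hε'0 : min ε 1 ≠ 0 := (lt_min hε one_pos).ne'
    have hε'top : min ε 1 ≠ ⊤ :=
      (lt_of_le_of_lt (min_le_right _ _) ENNReal.one_lt_top).ne
    obtain ⟨N, hN⟩ := hcauchy (min ε 1 / 2 / 2)
      (ENNReal.half_pos (ENNReal.half_pos hε'0).ne')
    refine ⟨N, fun n hn => ?_⟩
    rw [hDGEN]
    have hsup : ∀ φ : Φ, eDist (F (k n) φ.1) (Fb φ.1) ≤ min ε 1 / 2 := by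
      rintro ⟨φ, hφ⟩
      obtain ⟨N2, hN2⟩ := hFbconv φ hφ (min ε 1 / 2 / 2)
        (ENNReal.half_pos (ENNReal.half_pos hε'0).ne')
      calc eDist (F (k n) φ) (Fb φ)
          ≤ eDist (F (k n) φ) (F (k (max N N2)) φ) + eDist (F (k (max N N2)) φ) (Fb φ) :=
            eDist_triangle' _ _ _
        _ ≤ min ε 1 / 2 / 2 + min ε 1 / 2 / 2 :=
            add_le_add (hN n hn (max N N2) (le_max_left _ _) φ hφ).le
              (hN2 (max N N2) (le_max_right _ _)).le
        _ = min ε 1 / 2 := ENNReal.add_halves _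
    calc (⨆ φ : Φ, eDist (F (k n) φ.1) (Fb φ.1)) ≤ min ε 1 / 2 := iSup_le hsup
      _ < min ε 1 := ENNReal.half_lt_self hε'0 hε'top
      _ ≤ ε := min_le_left _ _
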